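/- Suppose τ ∈ (0,1) and g is a horizontally valid two-dimensional move with g + gᵀ = t_τ. Then ĝ(α,2) ≤ 2/α + τ for every α ∈ [2,∞) (and ĝ(∞,2) ≤ τ). -/

import Mathlib

open scoped BigOperators Classical

noncomputable section

/-- The profile `P_x` of a point `x ∈ ℝ≥0`, viewed as a function on `[1,∞]`
(the extended reals `EReal` model the interval with its point `∞ = ⊤`):
`P_x(α) = 1` for `α ∈ [1,2)`, `P_x(α) = (xα - x)/(x + α - 2)` for `α ∈ [2,∞)`,
and `P_x(∞) = x` (with the conventions `P_0(α) = 0` for `α ∈ [2,∞]`, which the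
formula also yields since division by zero is zero). -/
def Pfun (x : ℝ) (α : EReal) : ℝ :=
  if α = ⊤ then x
  else if α.toReal < 2 then 1
  else (x * α.toReal - x) / (x + α.toReal - 2)

/-- A one-dimensional move: a finitely supported function on `ℝ≥0`
(modeled as a function on `ℝ` vanishing on the negatives). -/
def IsMove1 (f : ℝ → ℝ) : Prop :=
  (Function.support f).Finite ∧ ∀ x : ℝ, x < 0 → f x = 0

/-- Validity of a one-dimensional move. -/
def IsValid1 (f : ℝ → ℝ) : Prop :=
  (∑ᶠ x, f x) = 0 ∧
  (∀ lam : ℝ, 0 < lam → 0 ≤ ∑ᶠ x, (x / (x + lam)) * f x) ∧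
  0 ≤ ∑ᶠ x, x * f x

/-- The profile of a one-dimensional move. -/
def prof1 (f : ℝ → ℝ) (α : EReal) : ℝ := ∑ᶠ x, f x * Pfun x α

/-- A two-dimensional move: a finitely supported function on `ℝ≥0 × ℝ≥0`. -/
def IsMove2 (q : ℝ × ℝ → ℝ) : Prop :=
  (Function.support q).Finite ∧ ∀ p : ℝ × ℝ, p.1 < 0 ∨ p.2 < 0 → q p = 0

/-- A two-dimensional move is horizontally valid if all of its rows are valid. -/
def HorizValid (q : ℝ × ℝ → ℝ) : Prop := ∀ y : ℝ, IsValid1 fun x => q (x, y)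

/-- A two-dimensional move is vertically valid if all of its columns are valid. -/
def VertValid (q : ℝ × ℝ → ℝ) : Prop := ∀ x : ℝ, IsValid1 fun y => q (x, y)

/-- The two-variable profile of a two-dimensional move. -/
def prof2 (q : ℝ × ℝ → ℝ) (α β : EReal) : ℝ :=
  ∑ᶠ p : ℝ × ℝ, q p * Pfun p.1 α * Pfun p.2 β

/-- The transpose move `qᵀ(x,y) = q(y,x)`. -/
def transpose (q : ℝ × ℝ → ℝ) : ℝ × ℝ → ℝ := fun p => q (p.2, p.1)

/-- `pt x y` is the indicator move `⟦x,y⟧`. -/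
def pt (x y : ℝ) : ℝ × ℝ → ℝ := fun p => if p = (x, y) then 1 else 0

/-- The move `t_τ = 2·⟦1,1⟧ - ⟦2-τ,0⟧ - ⟦0,2-τ⟧`. -/
def tMove (τ : ℝ) : ℝ × ℝ → ℝ :=
  fun p => 2 * pt 1 1 p - pt (2 - τ) 0 p - pt 0 (2 - τ) p

/-- `slice g b` is the move `g_b`: the part of `g` on the horizontal line `y = b`. -/
def hslice (g : ℝ × ℝ → ℝ) (b : ℝ) : ℝ × ℝ → ℝ := fun p => if p.2 = b then g p else 0


section AuxStmt10

lemma pfun_top' (x : ℝ) : Pfun x ⊤ = x := by simp [Pfun]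

lemma pfun_coe' (x α : ℝ) (hα : 2 ≤ α) :
    Pfun x ((α : ℝ) : EReal) = (x * α - x) / (x + α - 2) := by
  rw [Pfun, if_neg (EReal.coe_ne_top α)]
  simp only [EReal.toReal_coe]
  simp [not_lt.mpr hα]

lemma pfun_two' (y : ℝ) : Pfun y ((2 : ℝ) : EReal) = if y = 0 then 0 else 1 := by
  rw [pfun_coe' y 2 le_rfl]
  have h1 : y * 2 - y = y := by ring
  have h2 : y + 2 - 2 = y := by ring
  rw [h1, h2]
  by_cases hy : y = 0
  · simp [hy]
  · rw [div_self hy, if_neg hy]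

lemma row_nonneg_real (f : ℝ → ℝ) (hfin : (Function.support f).Finite)
    (hneg : ∀ x : ℝ, x < 0 → f x = 0) (hv : IsValid1 f) (α : ℝ) (hα : 2 ≤ α) :
    0 ≤ ∑ᶠ x, f x * Pfun x ((α : ℝ) : EReal) := by
  classical
  set sF : Finset ℝ := hfin.toFinset with hsF
  have hsub : Function.support f ⊆ ↑sF := by simp [hsF]
  have hpos : ∀ x ∈ sF, 0 ≤ x := by
    intro x hx
    by_contra hneg'
    push_neg at hneg'
    have : f x ≠ 0 := by simpa [hsF] using hx
    exact this (hneg x hneg')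
  have hsubP : Function.support (fun x => f x * Pfun x ((α : ℝ) : EReal)) ⊆ ↑sF := by
    intro x hx
    simp only [Function.mem_support] at hx
    exact hsub (fun h => hx (by rw [h, zero_mul]))
  have hsubQ : ∀ lam : ℝ, Function.support (fun x => (x / (x + lam)) * f x) ⊆ ↑sF := by
    intro lam x hx
    simp only [Function.mem_support] at hx
    exact hsub (fun h => hx (by rw [h, mul_zero]))
  rw [finsum_eq_finset_sum_of_support_subset _ hsubP]
  rcases eq_or_lt_of_le hα with h2 | h2
  · subst h2
    have hL : ∀ x ∈ sF, f x * Pfun x ((2 : ℝ) : EReal) = if x = 0 then 0 else f x := by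
      intro x _
      rw [pfun_two']
      by_cases hx0 : x = 0 <;> simp [hx0]
    rw [Finset.sum_congr rfl hL]
    have htend : Filter.Tendsto (fun lam : ℝ => ∑ x ∈ sF, (x / (x + lam)) * f x)
        (nhdsWithin 0 (Set.Ioi 0)) (nhds (∑ x ∈ sF, if x = 0 then 0 else f x)) := by
      apply tendsto_finset_sum
      intro x hx
      by_cases hx0 : x = 0
      · subst hx0
        simp only [zero_div, zero_mul, if_pos rfl]
        exact tendsto_const_nhds
      · rw [if_neg hx0]
        have hxpos : 0 < x := lt_of_le_of_ne (hpos x hx) (Ne.symm hx0)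
        have hc : ContinuousAt (fun lam : ℝ => (x / (x + lam)) * f x) 0 := by
          apply ContinuousAt.mul _ continuousAt_const
          apply ContinuousAt.div continuousAt_const
          · exact (continuous_const.add continuous_id).continuousAt
          · simpa using ne_of_gt hxpos
        have heval : x / (x + 0) * f x = f x := by
          rw [add_zero, div_self (ne_of_gt hxpos), one_mul]
        have := hc.tendsto
        rw [heval] at this
        exact this.mono_left nhdsWithin_le_nhds
    apply ge_of_tendsto htend
    filter_upwards [self_mem_nhdsWithin] with lam hlam
    have h0 := hv.2.1 lam hlam
    rwa [finsum_eq_finset_sum_of_support_subset _ (hsubQ lam)] at h0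
  · set lam : ℝ := α - 2 with hlamdef
    have hlam : 0 < lam := by simp [hlamdef]; linarith
    have h0 := hv.2.1 lam hlam
    rw [finsum_eq_finset_sum_of_support_subset _ (hsubQ lam)] at h0
    have hEq : ∀ x ∈ sF, f x * Pfun x ((α : ℝ) : EReal)
        = (α - 1) * ((x / (x + lam)) * f x) := by
      intro x hx
      rw [pfun_coe' x α hα]
      have hxl : x + lam ≠ 0 := ne_of_gt (by have := hpos x hx; linarith)
      have hd : x + α - 2 = x + lam := by rw [hlamdef]; ring
      rw [hd]
      field_simp
    rw [Finset.sum_congr rfl hEq, ← Finset.mul_sum]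
    exact mul_nonneg (by linarith) h0

lemma row_nonneg_top (f : ℝ → ℝ) (hv : IsValid1 f) :
    0 ≤ ∑ᶠ x, f x * Pfun x ⊤ := by
  have h : ∀ x : ℝ, f x * Pfun x ⊤ = x * f x := fun x => by rw [pfun_top']; ring
  rw [finsum_congr h]
  exact hv.2.2

lemma main_aux (τ : ℝ) (g : ℝ × ℝ → ℝ) (hmove : IsMove2 g) (hval : HorizValid g)
    (hsum : ∀ p, g p + transpose g p = tMove τ p) (α : EReal)
    (hrow : ∀ y : ℝ, 0 ≤ ∑ᶠ x, g (x, y) * Pfun x α) :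
    prof2 g α ((2 : ℝ) : EReal) ≤ 2 * Pfun 1 α - Pfun (2 - τ) α - Pfun 0 α := by
  classical
  obtain ⟨hfin, hzero⟩ := hmove
  set W : ℝ → ℝ := fun x => Pfun x α with hW
  set F : Finset (ℝ × ℝ) := hfin.toFinset with hF
  set A : Finset ℝ := (F.image Prod.fst ∪ F.image Prod.snd) ∪ {0, 1, 2 - τ} with hA
  have h0A : (0 : ℝ) ∈ A := by simp [hA]
  have h1A : (1 : ℝ) ∈ A := by simp [hA]
  have htA : (2 - τ) ∈ A := by simp [hA]
  have hAfst : ∀ p : ℝ × ℝ, g p ≠ 0 → p.1 ∈ A := by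
    intro p hp
    have hpF : p ∈ F := by simp [hF, Function.mem_support, hp]
    exact Finset.mem_union.mpr (Or.inl (Finset.mem_union.mpr
      (Or.inl (Finset.mem_image_of_mem Prod.fst hpF))))
  have hAsnd : ∀ p : ℝ × ℝ, g p ≠ 0 → p.2 ∈ A := by
    intro p hp
    have hpF : p ∈ F := by simp [hF, Function.mem_support, hp]
    exact Finset.mem_union.mpr (Or.inl (Finset.mem_union.mpr
      (Or.inr (Finset.mem_image_of_mem Prod.snd hpF))))
  have hgB : ∀ p : ℝ × ℝ, g p ≠ 0 → p ∈ A ×ˢ A := fun p hp =>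
    Finset.mem_product.mpr ⟨hAfst p hp, hAsnd p hp⟩
  have hRnonneg : 0 ≤ ∑ x ∈ A, g (x, 0) * W x := by
    have hsub : Function.support (fun x => g (x, 0) * W x) ⊆ ↑A := by
      intro x hx
      simp only [Function.mem_support] at hx
      have hg : g (x, 0) ≠ 0 := fun h => hx (by rw [h, zero_mul])
      exact hAfst (x, 0) hg
    have h := hrow 0
    rwa [finsum_eq_finset_sum_of_support_subset _ hsub] at h
  have hrowzero : ∀ x : ℝ, ∑ y ∈ A, g (y, x) = 0 := by
    intro x
    have h1 := (hval x).1
    have hsub : Function.support (fun u => g (u, x)) ⊆ ↑A := by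
      intro u hu
      simp only [Function.mem_support] at hu
      exact hAfst (u, x) hu
    rwa [finsum_eq_finset_sum_of_support_subset _ hsub] at h1
  have e1 : prof2 g α ((2 : ℝ) : EReal)
      = ∑ p ∈ A ×ˢ A, g p * W p.1 * Pfun p.2 ((2 : ℝ) : EReal) := by
    apply finsum_eq_finset_sum_of_support_subset
    intro p hp
    simp only [Function.mem_support] at hp
    have hg : g p ≠ 0 := fun h => hp (by rw [h, zero_mul, zero_mul])
    exact hgB p hg
  have e2 : ∑ p ∈ A ×ˢ A, g p * W p.1 * Pfun p.2 ((2 : ℝ) : EReal)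
      = (∑ p ∈ A ×ˢ A, g p * W p.1) - ∑ x ∈ A, g (x, 0) * W x := by
    have hterm : ∀ p ∈ A ×ˢ A, g p * W p.1 * Pfun p.2 ((2 : ℝ) : EReal)
        = g p * W p.1 - (if p.2 = 0 then g p * W p.1 else 0) := by
      intro p _
      rw [pfun_two']
      by_cases h : p.2 = 0 <;> simp [h]
    rw [Finset.sum_congr rfl hterm, Finset.sum_sub_distrib]
    congr 1
    have h1 : ∑ p ∈ A ×ˢ A, (if p.2 = 0 then g p * W p.1 else 0)
        = ∑ y ∈ A, ∑ x ∈ A, (if y = 0 then g (x, y) * W x else 0) :=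
      Finset.sum_product_right' A A (fun x y => if y = 0 then g (x, y) * W x else 0)
    rw [h1]
    have h2 : ∀ y ∈ A, (∑ x ∈ A, (if y = 0 then g (x, y) * W x else 0))
        = (if y = 0 then ∑ x ∈ A, g (x, y) * W x else 0) := by
      intro y _
      by_cases h : y = 0 <;> simp [h]
    rw [Finset.sum_congr rfl h2, Finset.sum_ite_eq' A 0 (fun y => ∑ x ∈ A, g (x, y) * W x),
      if_pos h0A]
  have e3 : (∑ p ∈ A ×ˢ A, g p * W p.1) = 2 * W 1 - W (2 - τ) - W 0 := by
    have hterm : ∀ p ∈ A ×ˢ A, g p * W p.1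
        = tMove τ p * W p.1 - g (p.2, p.1) * W p.1 := by
      intro p _
      have hs := hsum p
      have ht : transpose g p = g (p.2, p.1) := rfl
      rw [ht] at hs
      rw [← hs]
      ring
    rw [Finset.sum_congr rfl hterm, Finset.sum_sub_distrib]
    have hzero2 : ∑ p ∈ A ×ˢ A, g (p.2, p.1) * W p.1 = 0 := by
      have h1 : ∑ p ∈ A ×ˢ A, g (p.2, p.1) * W p.1
          = ∑ x ∈ A, ∑ y ∈ A, g (y, x) * W x :=
        Finset.sum_product' A A (fun x y => g (y, x) * W x)
      rw [h1]
      apply Finset.sum_eq_zero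
      intro x _
      rw [← Finset.sum_mul, hrowzero x, zero_mul]
    rw [hzero2, sub_zero]
    have hterm2 : ∀ p ∈ A ×ˢ A, tMove τ p * W p.1
        = 2 * (if p = ((1 : ℝ), (1 : ℝ)) then W p.1 else 0)
          - (if p = ((2 - τ : ℝ), (0 : ℝ)) then W p.1 else 0)
          - (if p = ((0 : ℝ), (2 - τ : ℝ)) then W p.1 else 0) := by
      intro p _
      unfold tMove pt
      split_ifs <;> ring
    rw [Finset.sum_congr rfl hterm2]
    rw [Finset.sum_sub_distrib, Finset.sum_sub_distrib, ← Finset.mul_sum]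
    rw [Finset.sum_ite_eq' (A ×ˢ A) ((1 : ℝ), (1 : ℝ)) (fun p => W p.1),
      Finset.sum_ite_eq' (A ×ˢ A) ((2 - τ : ℝ), (0 : ℝ)) (fun p => W p.1),
      Finset.sum_ite_eq' (A ×ˢ A) ((0 : ℝ), (2 - τ : ℝ)) (fun p => W p.1)]
    rw [if_pos (Finset.mem_product.mpr ⟨h1A, h1A⟩),
      if_pos (Finset.mem_product.mpr ⟨htA, h0A⟩),
      if_pos (Finset.mem_product.mpr ⟨h0A, htA⟩)]
  rw [e1, e2, e3]
  linarith

end AuxStmt10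

/-- If `g` is horizontally valid and `g + gᵀ = t_τ`, then `ĝ(α,2) ≤ 2/α + τ`
for all `α ∈ [2,∞)`, and `ĝ(∞,2) ≤ τ`. -/
theorem stmt_10 (τ : ℝ) (hτ : τ ∈ Set.Ioo (0 : ℝ) 1)
    (g : ℝ × ℝ → ℝ) (hmove : IsMove2 g) (hval : HorizValid g)
    (hsum : ∀ p, g p + transpose g p = tMove τ p) :
    (∀ α : ℝ, 2 ≤ α →
      prof2 g ((α : ℝ) : EReal) ((2 : ℝ) : EReal) ≤ 2 / α + τ) ∧
    prof2 g ⊤ ((2 : ℝ) : EReal) ≤ τ := by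
  obtain ⟨hτ0, hτ1⟩ := hτ
  have hrowdata : ∀ y : ℝ, (Function.support (fun x => g (x, y))).Finite ∧
      (∀ x : ℝ, x < 0 → g (x, y) = 0) := by
    intro y
    constructor
    · apply Set.Finite.subset (hmove.1.preimage
        (fun a _ b _ h => congrArg Prod.fst h : Set.InjOn (fun x : ℝ => (x, y)) _))
      intro x hx
      exact hx
    · intro x hx
      exact hmove.2 (x, y) (Or.inl hx)
  constructor
  · intro α hα
    have hrow : ∀ y : ℝ, 0 ≤ ∑ᶠ x, g (x, y) * Pfun x ((α : ℝ) : EReal) := fun y =>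
      row_nonneg_real _ (hrowdata y).1 (hrowdata y).2 (hval y) α hα
    have h := main_aux τ g hmove hval hsum _ hrow
    have hα0 : (0 : ℝ) < α := by linarith
    have hP1 : Pfun 1 ((α : ℝ) : EReal) = 1 := by
      rw [pfun_coe' _ _ hα]
      have h1 : (1 : ℝ) * α - 1 = α - 1 := by ring
      have h2 : (1 : ℝ) + α - 2 = α - 1 := by ring
      rw [h1, h2, div_self (by linarith : α - (1:ℝ) ≠ 0)]
    have hP0 : Pfun 0 ((α : ℝ) : EReal) = 0 := by
      rw [pfun_coe' _ _ hα]
      norm_num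
    have hPt : Pfun (2 - τ) ((α : ℝ) : EReal)
        = ((2 - τ) * α - (2 - τ)) / (α - τ) := by
      rw [pfun_coe' _ _ hα]
      congr 1
      ring
    rw [hP1, hP0, hPt] at h
    have hd : (0 : ℝ) < α - τ := by linarith
    have key : 2 - 2 / α - τ ≤ ((2 - τ) * α - (2 - τ)) / (α - τ) := by
      rw [le_div_iff₀ hd]
      have h2α : 2 / α * α = 2 := div_mul_cancel₀ 2 (ne_of_gt hα0)
      have hu1 : 2 / α ≤ 1 := by rw [div_le_one hα0]; linarith
      have hu0 : 0 < 2 / α := by positivity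
      nlinarith [h2α, mul_le_mul_of_nonneg_left hu1 hτ0.le,
        mul_nonneg hτ0.le (sub_nonneg.mpr hτ1.le)]
    linarith
  · have hrow : ∀ y : ℝ, 0 ≤ ∑ᶠ x, g (x, y) * Pfun x ⊤ := fun y =>
      row_nonneg_top _ (hval y)
    have h := main_aux τ g hmove hval hsum ⊤ hrow
    rw [pfun_top', pfun_top', pfun_top'] at h
    linarith
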